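/- Let G be the nr×nr block matrix (r×r blocks of size n×n) that is zero outside its last (r-th) block row and whose (r, k) block equals ∑_{j=1}^{k} (t − t_j)^{-1} A_j, and let C := ∑_{i=1}^r (t − t_i)^{-1} A_i. Then for every m ≥ 1, the m-th iterated matrix G_m of the system Y' = GY is zero outside its last block row, and its (r, r) block equals the m-th iterated matrix C_m of the system Y' = CY. -/

import Mathlib

/-- The iterated matrices of the system `Y' = C Y`: `iterMat d C 0 = C₁ = C` and
`iterMat d C m = C_{m+1} = ∂(C_m) + C_m · C`, where `∂ = d` is applied entrywise. -/
def iterMat {K : Type*} [Field K] {ι : Type*} [Fintype ι] [DecidableEq ι]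
    (d : K → K) (C : Matrix ι ι K) : ℕ → Matrix ι ι K
  | 0 => C
  | m + 1 => (iterMat d C m).map d + iterMat d C m * C

/-- The matrix `G`: zero outside the last block row, with `(r,k)`-block
`∑_{j=1}^{k} (t - t_j)⁻¹ A_j`. -/
def Gmat {K : Type*} [Field K] {n r : ℕ} (t : K) (ts : Fin r → K)
    (A : Fin r → Matrix (Fin n) (Fin n) K) :
    Matrix (Fin r × Fin n) (Fin r × Fin n) K :=
  fun p q =>
    if p.1.val = r - 1 then
      ∑ j ∈ Finset.univ.filter (fun j : Fin r => j ≤ q.1), (t - ts j)⁻¹ * A j p.2 q.2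
    else 0

/-- For every `m ≥ 1`, the `m`-th iterated matrix `G_m` of `Y' = G Y` is zero outside
its last block row, and its `(r,r)`-block equals the `m`-th iterated matrix `C_m` of the
Fuchsian system `C = ∑ (t - tᵢ)⁻¹ Aᵢ`. -/
theorem iterated_matrix_G_last_block_row
    {K : Type*} [Field K]
    (d : K → K) (hd_add : ∀ a b : K, d (a + b) = d a + d b)
    (hd_mul : ∀ a b : K, d (a * b) = a * d b + d a * b)
    {n r : ℕ} (hr : 0 < r) (t : K) (ht : d t = 1)
    (ts : Fin r → K) (hts : ∀ i, d (ts i) = 0)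
    (hdist : Function.Injective ts) (htne : ∀ i, t ≠ ts i)
    (A : Fin r → Matrix (Fin n) (Fin n) K) (hA : ∀ i a b, d (A i a b) = 0) :
    ∀ m : ℕ, 1 ≤ m →
      (∀ pq qq : Fin r × Fin n, pq.1.val ≠ r - 1 →
        iterMat d (Gmat t ts A) (m - 1) pq qq = 0) ∧
      (∀ a b : Fin n,
        iterMat d (Gmat t ts A) (m - 1) (⟨r - 1, by omega⟩, a) (⟨r - 1, by omega⟩, b) =
          iterMat d (∑ i, (t - ts i)⁻¹ • A i) (m - 1) a b) := by
  have hd0 : d 0 = 0 := by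
    have h : d 0 = d 0 + d 0 := by
      conv_lhs => rw [show (0 : K) = 0 + 0 by ring, hd_add]
    exact (left_eq_add.mp h)
  set kr : Fin r := ⟨r - 1, by omega⟩ with hkr
  have hCapp : ∀ (c b : Fin n), (∑ i, (t - ts i)⁻¹ • A i) c b
      = ∑ j, (t - ts j)⁻¹ * A j c b := by
    intro c b
    simp [Matrix.sum_apply, Matrix.smul_apply, smul_eq_mul]
  have hGlast : ∀ (c b : Fin n),
      Gmat t ts A (kr, c) (kr, b) = (∑ i, (t - ts i)⁻¹ • A i) c b := by
    intro c b
    rw [hCapp]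
    simp only [Gmat, if_pos rfl, if_true]
    rw [if_pos (show (kr : ℕ) = r - 1 from rfl)]
    refine Finset.sum_congr ?_ (fun x _ => rfl)
    apply Finset.filter_true_of_mem
    intro j _
    have := j.isLt
    exact Fin.le_def.mpr (by show (j : ℕ) ≤ r - 1; omega)
  have key : ∀ m : ℕ,
      (∀ pq qq : Fin r × Fin n, pq.1.val ≠ r - 1 →
        iterMat d (Gmat t ts A) m pq qq = 0) ∧
      (∀ a b : Fin n,
        iterMat d (Gmat t ts A) m (kr, a) (kr, b) =
          iterMat d (∑ i, (t - ts i)⁻¹ • A i) m a b) := by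
    intro m
    induction m with
    | zero =>
      constructor
      · intro pq qq h
        simp [iterMat, Gmat, h]
      · intro a b
        exact hGlast a b
    | succ m ih =>
      obtain ⟨ih0, ih1⟩ := ih
      constructor
      · intro pq qq h
        simp only [iterMat, Matrix.add_apply, Matrix.map_apply, Matrix.mul_apply]
        rw [ih0 pq qq h, hd0, zero_add]
        apply Finset.sum_eq_zero
        intro s _
        rw [ih0 pq s h, zero_mul]
      · intro a b
        simp only [iterMat, Matrix.add_apply, Matrix.map_apply, Matrix.mul_apply]
        rw [ih1 a b]
        congr 1
        rw [Fintype.sum_prod_type]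
        rw [Finset.sum_eq_single kr]
        · apply Finset.sum_congr rfl
          intro c _
          rw [ih1 a c, hGlast c b]
        · intro k _ hk
          apply Finset.sum_eq_zero
          intro c _
          have hz : Gmat t ts A (k, c) (kr, b) = 0 := by
            simp only [Gmat]
            rw [if_neg]
            intro hc
            exact hk (Fin.ext hc)
          rw [hz, mul_zero]
        · intro h
          exact absurd (Finset.mem_univ kr) h
  intro m _
  exact key (m - 1)
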